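/- For every idempotent f ∈ A and every x ∈ J there exist a, b ∈ 1 + J and y ∈ J with fy = yf = 0 such that f + y = a·(f + x)·b. -/

import Mathlib

set_option maxHeartbeats 2000000 in
lemma key {A : Type*} [Ring A] (f x v : A) (hff : f*f = f)
    (hv1 : v*(1+f*x*f) = 1) (hv2 : (1+f*x*f)*v = 1) :
    (1 - ((1-f)*x*f)*(f*v)) * (f+x) * ((1 - (f*v)*(f*x*(1-f)))*v)
      = f + ((1-f)*x*(1-f) - ((1-f)*x*f)*((f*v)*(f*x*(1-f))))*v
    ∧ f * (((1-f)*x*(1-f) - ((1-f)*x*f)*((f*v)*(f*x*(1-f))))*v) = 0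
    ∧ (((1-f)*x*(1-f) - ((1-f)*x*f)*((f*v)*(f*x*(1-f))))*v) * f = 0 := by
  have hfxfv : f*x*f*v = 1 - v := by
    have h := hv2; rw [add_mul, one_mul] at h; exact eq_sub_of_add_eq' h
  have hvfxf : v*(f*x*f) = 1 - v := by
    have h := hv1; rw [mul_add, mul_one] at h; exact eq_sub_of_add_eq' h
  have hfvb : f*v = f + v - 1 := by
    have h1 : (1 - f)*(1 + f*x*f) = 1 - f := by
      rw [mul_add, mul_one, sub_mul, one_mul, ← mul_assoc, ← mul_assoc, hff]; abel
    have h2 : (1 - f)*v = 1 - f := by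
      calc (1-f)*v = ((1-f)*(1+f*x*f))*v := by rw [h1]
        _ = (1-f)*((1+f*x*f)*v) := mul_assoc _ _ _
        _ = 1 - f := by rw [hv2, mul_one]
    rw [sub_mul, one_mul] at h2
    have h3 : f*v = v - (1 - f) := by rw [← h2]; abel
    rw [h3]; abel
  have hvfb : v*f = f + v - 1 := by
    have h1 : (1 + f*x*f)*(1 - f) = 1 - f := by
      rw [add_mul, one_mul, mul_sub, mul_one, mul_assoc (f*x) f f, hff]; abel
    have h2 : v*(1 - f) = 1 - f := by
      calc v*(1-f) = v*((1+f*x*f)*(1-f)) := by rw [h1]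
        _ = (v*(1+f*x*f))*(1-f) := (mul_assoc _ _ _).symm
        _ = 1 - f := by rw [hv1, one_mul]
    rw [mul_sub, mul_one] at h2
    have h3 : v*f = v - (1 - f) := by rw [← h2]; abel
    rw [h3]; abel
  have hfxv : f*x*v = 1 - v - f*x*f + f*x := by
    have h : f*x*(f*v) = f*x*f + f*x*v - f*x := by
      rw [hfvb, mul_sub, mul_add, mul_one]
    rw [← mul_assoc, hfxfv] at h
    rw [h]; abel
  have hvxf : v*x*f = 1 - v - f*x*f + x*f := by
    have h : v*(f*(x*f)) = f*(x*f) + v*(x*f) - x*f := by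
      rw [← mul_assoc, hvfb, sub_mul, add_mul, one_mul]
    have h3 : v*(f*x*f) = v*(f*(x*f)) := by rw [mul_assoc f x f]
    rw [h3, h] at hvfxf
    have h4 : v*(x*f) = (1 - v) - f*(x*f) + x*f := by rw [← hvfxf]; abel
    calc v*x*f = v*(x*f) := by rw [mul_assoc]
      _ = 1 - v - f*x*f + x*f := by rw [h4, ← mul_assoc]
  have hvxv : v*x*v = f*x*f + v*x + x*v - x + v + v + v - v*v - 1 - 1 := by
    have e1 : v*x*(f*v) = (v*x*f)*v := (mul_assoc (v*x) f v).symm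
    have e2 : (v*x*f)*v = v - v*v - (f*x*f)*v + (x*f)*v := by
      rw [hvxf]; noncomm_ring
    have e3 : (f*x*f)*v = 1 - v := hfxfv
    have e4 : (x*f)*v = x*f + x*v - x := by
      rw [mul_assoc, hfvb, mul_sub, mul_add, mul_one]
    have e5 : v*x*(f*v) = v*x*f + v*x*v - v*x := by
      rw [hfvb, mul_sub, mul_add, mul_one]
    have e6 : v*x*f + v*x*v - v*x = v - v*v - (1-v) + (x*f + x*v - x) := by
      rw [← e3, ← e4, ← e2, ← e1, e5]
    rw [hvxf] at e6
    have : v*x*v = v - v*v - (1-v) + (x*f + x*v - x) + v*x - (1 - v - f*x*f + x*f) := by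
      rw [← e6]; abel
    rw [this]; abel
  have R1 : ∀ t, f*(f*t) = f*t := fun t => by rw [← mul_assoc, hff]
  have R2 : ∀ t, f*(v*t) = f*t + v*t - t := fun t => by
    rw [← mul_assoc, hfvb, sub_mul, add_mul, one_mul]
  have R3 : ∀ t, v*(f*t) = f*t + v*t - t := fun t => by
    rw [← mul_assoc, hvfb, sub_mul, add_mul, one_mul]
  have R4 : ∀ t, f*(x*(v*t)) = t - v*t - f*(x*(f*t)) + f*(x*t) := fun t => by
    have h : (f*x*v)*t = (1 - v - f*x*f + f*x)*t := by rw [hfxv]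
    simpa [mul_assoc, sub_mul, add_mul, one_mul] using h
  have R4b : f*(x*v) = 1 - v - f*(x*f) + f*x := by simpa [mul_assoc] using hfxv
  have R5 : ∀ t, v*(x*(f*t)) = t - v*t - f*(x*(f*t)) + x*(f*t) := fun t => by
    have h : (v*x*f)*t = (1 - v - f*x*f + x*f)*t := by rw [hvxf]
    simpa [mul_assoc, sub_mul, add_mul, one_mul] using h
  have R5b : v*(x*f) = 1 - v - f*(x*f) + x*f := by simpa [mul_assoc] using hvxf
  have R6 : ∀ t, v*(x*(v*t))
      = f*(x*(f*t)) + v*(x*t) + x*(v*t) - x*t + v*t + v*t + v*t - v*(v*t) - t - t := fun t => by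
    have h : (v*x*v)*t = (f*x*f + v*x + x*v - x + v + v + v - v*v - 1 - 1)*t := by rw [hvxv]
    simpa [mul_assoc, sub_mul, add_mul, one_mul] using h
  have R6b : v*(x*v) = f*(x*f) + v*x + x*v - x + v + v + v - v*v - 1 - 1 := by
    simpa [mul_assoc] using hvxv
  refine ⟨?_, ?_, ?_⟩ <;>
  · simp only [mul_add, add_mul, mul_sub, sub_mul, mul_one, one_mul, mul_assoc,
      R1, hff, R2, hfvb, R3, hvfb, R4, R4b, R5, R5b, R6, R6b]
    abel



/-- Item 1 of the proof of Theorem 3.1: for every idempotent `f` of `A` and every `x ∈ J`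
there are `a, b ∈ 1 + J` and `y ∈ J` with `f*y = y*f = 0` such that
`f + y = a * (f + x) * b`.  Here `A` is a finite-dimensional unital associative algebra
over a finite field and `J` is its Jacobson radical. -/
theorem exists_translate_orthogonal_to_idempotent
    {F A : Type*} [Field F] [Fintype F] [Ring A] [Algebra F A] [FiniteDimensional F A]
    (J : Ideal A) (hJ : J = (⊥ : Ideal A).jacobson)
    (f : A) (hf : IsIdempotentElem f) (x : A) (hx : x ∈ J) :
    ∃ a b y : A, a - 1 ∈ J ∧ b - 1 ∈ J ∧ y ∈ J ∧
      f * y = 0 ∧ y * f = 0 ∧ f + y = a * (f + x) * b := by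
  have hff : f * f = f := hf
  -- J is closed under right multiplication
  have hmulr : ∀ {u : A} (w : A), u ∈ J → u * w ∈ J := by
    intro u w hu
    subst hJ
    exact Ideal.mul_mem_right w _ hu
  -- left inverses of 1 + j
  have left_inv : ∀ j ∈ J, ∃ z : A, z * (1 + j) = 1 ∧ z - 1 ∈ J := by
    intro j hj
    obtain ⟨z, hz⟩ := Ideal.mem_jacobson_iff.1 (hJ ▸ hj) 1
    rw [Ideal.mem_bot] at hz
    rw [mul_one] at hz
    have hz1 : z * (1 + j) = 1 := by
      rw [mul_add, mul_one, ← sub_eq_zero]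
      calc z + z * j - 1 = z * j + z - 1 := by abel
        _ = 0 := hz
    refine ⟨z, hz1, ?_⟩
    have hz2 : z - 1 = -(z * j) := by
      have hz1' : z + z * j = 1 := by rw [← hz1, mul_add, mul_one]
      rw [← hz1']; abel
    rw [hz2]
    exact J.neg_mem (J.mul_mem_left z hj)
  -- two-sided inverses of 1 + j
  have inv2 : ∀ j ∈ J, ∃ v : A, v * (1 + j) = 1 ∧ (1 + j) * v = 1 ∧ v - 1 ∈ J := by
    intro j hj
    obtain ⟨z, hz1, hzJ⟩ := left_inv j hj
    obtain ⟨w, hw1, -⟩ := left_inv (z - 1) hzJ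
    rw [add_sub_cancel] at hw1
    have hw2 : w = 1 + j := by
      calc w = w * (z * (1 + j)) := by rw [hz1, mul_one]
        _ = (w * z) * (1 + j) := (mul_assoc _ _ _).symm
        _ = 1 + j := by rw [hw1, one_mul]
    exact ⟨z, hz1, by rw [← hw2]; exact hw1, hzJ⟩
  -- the element f*x*f lies in J
  have hfxfJ : f * x * f ∈ J := hmulr f (J.mul_mem_left f hx)
  obtain ⟨v, hv1, hv2, hvJ⟩ := inv2 (f * x * f) hfxfJ
  obtain ⟨hmain, hfy, hyf⟩ := key f x v hff hv1 hv2
  refine ⟨1 - ((1-f)*x*f)*(f*v), (1 - (f*v)*(f*x*(1-f)))*v,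
    ((1-f)*x*(1-f) - ((1-f)*x*f)*((f*v)*(f*x*(1-f))))*v, ?_, ?_, ?_, hfy, hyf, hmain.symm⟩
  · have h1 : (1 - ((1-f)*x*f)*(f*v)) - 1 = -(((1-f)*x*f)*(f*v)) := by abel
    rw [h1]
    exact J.neg_mem (hmulr (f*v) (hmulr f (J.mul_mem_left (1-f) hx)))
  · have h1 : (1 - (f*v)*(f*x*(1-f)))*v - 1 = (v - 1) - ((f*v)*(f*x*(1-f)))*v := by
      noncomm_ring
    rw [h1]
    exact J.sub_mem hvJ
      (hmulr v (J.mul_mem_left (f*v) (hmulr (1-f) (J.mul_mem_left f hx))))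
  · exact hmulr v (J.sub_mem (hmulr (1-f) (J.mul_mem_left (1-f) hx))
      (hmulr ((f*v)*(f*x*(1-f))) (hmulr f (J.mul_mem_left (1-f) hx))))
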